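/- Let f be a word over variables x₁, …, x_k. Then there exists a word g over x₁, …, x_k of length at most k(k²+1) such that every combinatorial Rees matrix semigroup satisfies the identity f ≈ g, i.e., for every combinatorial Rees matrix semigroup S_P and every assignment of the variables to elements of S_P, the products induced by f and g agree. -/

import Mathlib

/-- Elements of the combinatorial Rees matrix semigroup `S_P = (I × Λ) ∪ {0}`. -/
inductive RM (I Λ : Type*) where
  | zero : RM I Λ
  | elt  : I → Λ → RM I Λ

/-- The multiplication of `S_P`: `[i,λ]·[j,μ] = [i,μ]` if `P(λ,j) = 1` and `0` otherwise,
with `0` a zero element. -/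
def rmul {I Λ : Type*} (P : Λ → I → Bool) : RM I Λ → RM I Λ → RM I Λ
  | RM.elt i l, RM.elt j m => if P l j then RM.elt i m else RM.zero
  | _, _ => RM.zero


/-- The product `a₁ ⋯ aₖ` of a nonempty list, given as head `a` and tail `l`,
with respect to a multiplication `mul`. -/
def listProd {α : Type*} (mul : α → α → α) : α → List α → α
  | a, [] => a
  | a, b :: l => mul a (listProd mul b l)

/-- adjacent pairs of a list -/
def pairs {β : Type*} : List β → List (β × β)
  | a :: b :: l => (a, b) :: pairs (b :: l)
  | _ => []

@[simp] lemma pairs_nil {β : Type*} : pairs ([] : List β) = [] := rfl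
@[simp] lemma pairs_single {β : Type*} (a : β) : pairs [a] = [] := rfl
@[simp] lemma pairs_cons_cons {β : Type*} (a b : β) (l : List β) :
    pairs (a :: b :: l) = (a, b) :: pairs (b :: l) := rfl

lemma pairs_append {β : Type*} (a : β) : ∀ (l r : List β),
    pairs (l ++ a :: r) = pairs (l ++ [a]) ++ pairs (a :: r)
  | [], r => by simp
  | [x], r => by simp
  | x :: b :: l, r => by
    simpa using pairs_append a (b :: l) r

lemma pairs_prefix {β : Type*} : ∀ (l r : List β), pairs l <+: pairs (l ++ r)
  | [], r => by simp
  | [x], r => by simp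
  | x :: b :: l, r => by
    obtain ⟨t, ht⟩ := pairs_prefix (b :: l) r
    exact ⟨t, by simpa using ht⟩

lemma pairs_mem_left {β : Type*} : ∀ {l : List β} {p : β × β}, p ∈ pairs l → p.1 ∈ l
  | a :: b :: l, p, hp => by
    rw [pairs_cons_cons, List.mem_cons] at hp
    rcases hp with h | h
    · simp [h]
    · exact List.mem_cons_of_mem _ (pairs_mem_left h)

lemma mem_snd_pairs {β : Type*} : ∀ (a : β) (m r : List β) (x : β), x ∈ m →
    ∃ b, (b, x) ∈ pairs (a :: (m ++ r))
  | a, x' :: m', r, x, hx => by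
    rw [List.mem_cons] at hx
    rcases hx with h | h
    · exact ⟨a, by simp [h]⟩
    · obtain ⟨b, hb⟩ := mem_snd_pairs x' m' r x h
      exact ⟨b, List.mem_cons_of_mem _ hb⟩

section Sem
variable {I Λ : Type*} {k : ℕ}

/-- projection product ignoring `P` -/
def pi : RM I Λ → RM I Λ → RM I Λ
  | RM.elt i _, RM.elt _ m => RM.elt i m
  | _, _ => RM.zero

open Classical in
/-- normal form of a product -/
noncomputable def F (P : Λ → I → Bool) (α : Fin k → RM I Λ) (w : List (Fin k)) : RM I Λ :=
  if ((∀ x ∈ w, α x ≠ RM.zero) ∧ ∀ p ∈ pairs w, rmul P (α p.1) (α p.2) ≠ RM.zero)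
  then match w.head?, w.getLast? with
    | some h, some t => pi (α h) (α t)
    | _, _ => RM.zero
  else RM.zero

lemma rmul_zero_right (P : Λ → I → Bool) (a : RM I Λ) : rmul P a RM.zero = RM.zero := by
  cases a <;> rfl

lemma listProd_eq_F (P : Λ → I → Bool) (α : Fin k → RM I Λ) :
    ∀ (ys : List (Fin k)) (y : Fin k),
    listProd (rmul P) (α y) (ys.map α) = F P α (y :: ys) := by
  intro ys
  induction ys with
  | nil =>
    intro y
    show α y = F P α [y]
    unfold F
    cases hαy : α y with
    | zero =>
      rw [if_neg]
      intro h
      exact h.1 y (by simp) hαy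
    | elt i l =>
      rw [if_pos]
      · simp [pi, hαy]
      · constructor
        · intro x hx
          simp at hx
          subst hx
          simp [hαy]
        · intro p hp
          simp at hp
  | cons b l IH =>
    intro y
    show rmul P (α y) (listProd (rmul P) (α b) (l.map α)) = F P α (y :: b :: l)
    rw [IH b]
    by_cases hC : (∀ x ∈ b :: l, α x ≠ RM.zero) ∧
        ∀ p ∈ pairs (b :: l), rmul P (α p.1) (α p.2) ≠ RM.zero
    · obtain ⟨t, ht⟩ : ∃ t, (b :: l).getLast? = some t := ⟨_, List.getLast?_eq_getLast_of_ne_nil (by simp)⟩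
      have htmem : t ∈ b :: l := by
        obtain ⟨hne, heq⟩ := List.mem_getLast?_eq_getLast (by rw [ht]; rfl)
        rw [heq]; exact List.getLast_mem hne
      have hbne := hC.1 b (by simp)
      have htne := hC.1 t htmem
      cases hαb : α b with
      | zero => exact absurd hαb hbne
      | elt j m' =>
      cases hαt : α t with
      | zero => exact absurd hαt htne
      | elt j' m =>
      have hF : F P α (b :: l) = RM.elt j m := by
        unfold F
        rw [if_pos hC]
        simp [ht, hαb, hαt, pi]
      rw [hF]
      cases hαy : α y with
      | zero =>
        show RM.zero = F P α (y :: b :: l)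
        unfold F
        rw [if_neg (fun h => h.1 y (by simp) hαy)]
      | elt i l0 =>
        by_cases hP : P l0 j
        · have hL : rmul P (RM.elt i l0) (RM.elt j m) = RM.elt i m := by simp [rmul, hP]
          rw [hL]
          unfold F
          rw [if_pos]
          · have hgl : (y :: b :: l).getLast? = some t := by
              rw [List.getLast?_cons_cons]; exact ht
            simp [hgl, hαy, hαt, pi]
          · constructor
            · intro x hx
              rcases List.mem_cons.1 hx with h | h
              · subst h; simp [hαy]
              · exact hC.1 x h
            · intro p hp
              rw [pairs_cons_cons, List.mem_cons] at hp
              rcases hp with h | h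
              · subst h
                simp [hαy, hαb, rmul, hP]
              · exact hC.2 p h
        · have hL : rmul P (RM.elt i l0) (RM.elt j m) = RM.zero := by simp [rmul, hP]
          rw [hL]
          unfold F
          rw [if_neg (fun h => by
            have := h.2 (y, b) (by simp)
            simp [hαy, hαb, rmul, hP] at this)]
    · have hF : F P α (b :: l) = RM.zero := by
        unfold F; rw [if_neg hC]
      rw [hF, rmul_zero_right]
      unfold F
      rw [if_neg (fun h => hC ⟨fun x hx => h.1 x (List.mem_cons_of_mem _ hx),
          fun p hp => h.2 p (by rw [pairs_cons_cons]; exact List.mem_cons_of_mem _ hp)⟩)]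

/-- the data determining products in all Rees matrix semigroups -/
def dataEq (w w' : List (Fin k)) : Prop :=
  w.head? = w'.head? ∧ w.getLast? = w'.getLast? ∧ w.toFinset = w'.toFinset ∧
    (pairs w).toFinset = (pairs w').toFinset

lemma dataEq.refl (w : List (Fin k)) : dataEq w w := ⟨rfl, rfl, rfl, rfl⟩

lemma dataEq.trans {w₁ w₂ w₃ : List (Fin k)} (h : dataEq w₁ w₂) (h' : dataEq w₂ w₃) :
    dataEq w₁ w₃ :=
  ⟨h.1.trans h'.1, h.2.1.trans h'.2.1, h.2.2.1.trans h'.2.2.1, h.2.2.2.trans h'.2.2.2⟩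

lemma F_congr (P : Λ → I → Bool) (α : Fin k → RM I Λ) {w w' : List (Fin k)}
    (h : dataEq w w') : F P α w = F P α w' := by
  classical
  obtain ⟨h1, h2, h3, h4⟩ := h
  have hm : ∀ x : Fin k, x ∈ w ↔ x ∈ w' := fun x => by
    rw [← List.mem_toFinset, h3, List.mem_toFinset]
  have hmp : ∀ p : Fin k × Fin k, p ∈ pairs w ↔ p ∈ pairs w' := fun p => by
    rw [← List.mem_toFinset, h4, List.mem_toFinset]
  unfold F
  simp only [h1, h2]
  refine if_congr ⟨?_, ?_⟩ rfl rfl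
  · rintro ⟨hA, hB⟩
    exact ⟨fun x hx => hA x ((hm x).2 hx), fun p hp => hB p ((hmp p).2 hp)⟩
  · rintro ⟨hA, hB⟩
    exact ⟨fun x hx => hA x ((hm x).1 hx), fun p hp => hB p ((hmp p).1 hp)⟩

end Sem

section Comb
variable {k : ℕ}

lemma pairs_mem_right {β : Type*} : ∀ {l : List β} {p : β × β}, p ∈ pairs l → p.2 ∈ l
  | a :: b :: l, p, hp => by
    rw [pairs_cons_cons, List.mem_cons] at hp
    rcases hp with h | h
    · simp [h]
    · exact List.mem_cons_of_mem _ (pairs_mem_right h)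

lemma dataEq_del (u : List (Fin k)) (a : Fin k) (m v : List (Fin k))
    (H : (pairs (a :: (m ++ [a]))).toFinset ⊆ (pairs (u ++ [a])).toFinset) :
    dataEq (u ++ a :: (m ++ a :: v)) (u ++ a :: v) := by
  have hmem : ∀ x ∈ m, x ∈ u ∨ x = a := by
    intro x hx
    obtain ⟨b, hb⟩ := mem_snd_pairs a m [a] x hx
    have h2 : (b, x) ∈ pairs (u ++ [a]) :=
      List.mem_toFinset.1 (H (List.mem_toFinset.2 hb))
    have := pairs_mem_right h2
    simpa using this
  refine ⟨?_, ?_, ?_, ?_⟩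
  · cases u <;> simp
  · obtain ⟨t0, ht0⟩ : ∃ t0, (a :: v).getLast? = some t0 :=
      ⟨_, List.getLast?_eq_getLast_of_ne_nil (by simp)⟩
    have eL : (u ++ a :: (m ++ a :: v)).getLast? = some t0 := by
      rw [show u ++ a :: (m ++ a :: v) = (u ++ a :: m) ++ (a :: v) from by simp,
        List.getLast?_append, ht0, Option.some_or]
    have eR : (u ++ a :: v).getLast? = some t0 := by
      rw [show u ++ a :: v = u ++ (a :: v) from rfl, List.getLast?_append, ht0, Option.some_or]
    rw [eL, eR]
  · ext x
    simp only [List.toFinset_append, List.toFinset_cons, Finset.mem_union, Finset.mem_insert,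
      List.mem_toFinset, List.mem_append, List.mem_cons]
    have := hmem x
    tauto
  · have e1 : pairs (u ++ a :: (m ++ a :: v)) =
        pairs (u ++ [a]) ++ (pairs (a :: (m ++ [a])) ++ pairs (a :: v)) := by
      rw [pairs_append a u (m ++ a :: v)]
      congr 1
      have : a :: (m ++ a :: v) = (a :: m) ++ a :: v := rfl
      rw [this, pairs_append a (a :: m) v]
      rfl
    have e3 : pairs (u ++ a :: v) = pairs (u ++ [a]) ++ pairs (a :: v) :=
      pairs_append a u v
    rw [e1, e3]
    ext p
    simp only [List.toFinset_append, Finset.mem_union, List.mem_toFinset]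
    have hH : p ∈ pairs (a :: (m ++ [a])) → p ∈ pairs (u ++ [a]) := fun hp =>
      List.mem_toFinset.1 (H (List.mem_toFinset.2 hp))
    tauto

lemma exists_dataEq_shorter (w : List (Fin k)) (hlen : k * (k ^ 2 + 1) < w.length) :
    ∃ w' : List (Fin k), w'.length < w.length ∧ dataEq w w' := by
  classical
  set g : Fin w.length → Fin k × Fin (k ^ 2 + 1) := fun t =>
    (w.get t, ⟨(pairs (w.take (t.1 + 1))).toFinset.card, by
      have h1 : (pairs (w.take (t.1 + 1))).toFinset.card ≤ k ^ 2 := by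
        calc (pairs (w.take (t.1 + 1))).toFinset.card
            ≤ Fintype.card (Fin k × Fin k) := Finset.card_le_univ _
          _ = k ^ 2 := by simp [sq]
      omega⟩) with hg
  have hcard : Fintype.card (Fin k × Fin (k ^ 2 + 1)) < Fintype.card (Fin w.length) := by
    simpa using hlen
  obtain ⟨t, t', hne, heq⟩ := Fintype.exists_ne_map_eq_of_card_lt g hcard
  wlog hlt : (t : ℕ) < (t' : ℕ) generalizing t t'
  · exact this t' t hne.symm heq.symm (by omega)
  have hget : w.get t = w.get t' := congrArg Prod.fst heq
  have hcardeq : (pairs (w.take (t.1 + 1))).toFinset.card =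
      (pairs (w.take (t'.1 + 1))).toFinset.card := by
    have := congrArg Prod.snd heq
    simpa [hg] using congrArg Fin.val this
  -- prefix pair sets are monotone
  have hsub : (pairs (w.take (t.1 + 1))).toFinset ⊆ (pairs (w.take (t'.1 + 1))).toFinset := by
    obtain ⟨r, hr⟩ := List.take_prefix_take_left (l := w) (by omega : t.1 + 1 ≤ t'.1 + 1)
    obtain ⟨r', hr'⟩ := pairs_prefix (w.take (t.1 + 1)) r
    intro p hp
    rw [List.mem_toFinset] at hp ⊢
    rw [← hr, ← hr']
    exact List.mem_append_left _ hp
  have hSeq : (pairs (w.take (t.1 + 1))).toFinset = (pairs (w.take (t'.1 + 1))).toFinset :=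
    Finset.eq_of_subset_of_card_le hsub (le_of_eq hcardeq.symm)
  -- decompose the word
  have h1 : w.drop t.1 = w.get t :: w.drop (t.1 + 1) := by
    rw [List.get_eq_getElem]
    exact List.drop_eq_getElem_cons t.2
  have h2 : w.drop t'.1 = w.get t :: w.drop (t'.1 + 1) := by
    rw [hget, List.get_eq_getElem]
    exact List.drop_eq_getElem_cons t'.2
  have h3 : w.drop (t.1 + 1) =
      (w.drop (t.1 + 1)).take (t'.1 - (t.1 + 1)) ++ w.drop t'.1 := by
    conv_lhs => rw [← List.take_append_drop (t'.1 - (t.1 + 1)) (w.drop (t.1 + 1))]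
    rw [List.drop_drop]
    have : t.1 + 1 + (t'.1 - (t.1 + 1)) = t'.1 := by omega
    rw [this]
  obtain ⟨a, u, m, v, hw, hB, hC⟩ : ∃ (a : Fin k) (u m v : List (Fin k)),
      w = u ++ a :: (m ++ a :: v) ∧ w.take (t.1 + 1) = u ++ [a] ∧
        w.take (t'.1 + 1) = u ++ a :: (m ++ [a]) := by
    refine ⟨w.get t, w.take t.1, (w.drop (t.1 + 1)).take (t'.1 - (t.1 + 1)),
      w.drop (t'.1 + 1), ?_, ?_, ?_⟩
    · conv_lhs => rw [← List.take_append_drop t.1 w, h1, h3, h2]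
    · rw [List.take_succ, List.getElem?_eq_getElem t.2]
      simp [List.get_eq_getElem]
    · have hw1 : w = (w.take t.1 ++ w.get t :: (w.drop (t.1 + 1)).take (t'.1 - (t.1 + 1)))
          ++ w.drop t'.1 := by
        conv_lhs => rw [← List.take_append_drop t.1 w, h1, h3]
        simp
      have h5 := congrArg (List.take t'.1) hw1
      rw [List.take_left' (by
        simp only [List.length_append, List.length_take, List.length_cons, List.length_drop]
        omega)] at h5
      rw [List.take_succ, h5, List.getElem?_eq_getElem t'.2]
      have : w[t'.1] = w.get t := by rw [hget, List.get_eq_getElem]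
      simp [this]
  have H : (pairs (a :: (m ++ [a]))).toFinset ⊆ (pairs (u ++ [a])).toFinset := by
    intro p hp
    rw [hB] at hSeq
    rw [hSeq, hC, List.mem_toFinset, pairs_append a u (m ++ [a])]
    exact List.mem_append_right _ (List.mem_toFinset.1 hp)
  refine ⟨u ++ a :: v, ?_, ?_⟩
  · have := congrArg List.length hw
    simp only [List.length_append, List.length_cons] at this ⊢
    omega
  · have := dataEq_del u a m v H
    rw [← hw] at this
    exact this

lemma exists_short (k : ℕ) : ∀ (n : ℕ) (w : List (Fin k)), w.length ≤ n →
    ∃ w', w'.length ≤ k * (k ^ 2 + 1) ∧ dataEq w w'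
  | 0, w, h => ⟨w, le_trans h (Nat.zero_le _), dataEq.refl w⟩
  | n + 1, w, h => by
    by_cases hle : w.length ≤ k * (k ^ 2 + 1)
    · exact ⟨w, hle, dataEq.refl w⟩
    · obtain ⟨w', hlt, hde⟩ := exists_dataEq_shorter w (by omega)
      obtain ⟨w'', hlen, hde'⟩ := exists_short k n w' (by omega)
      exact ⟨w'', hlen, hde.trans hde'⟩

end Comb

/-- For every word `f = y :: ys` over variables `x₁, …, x_k` there is a word `g = z :: zs`
of length at most `k(k² + 1)` such that every combinatorial Rees matrix semigroup satisfies
the identity `f ≈ g`. -/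
theorem stmt_10 (k : ℕ) (y : Fin k) (ys : List (Fin k)) :
    ∃ (z : Fin k) (zs : List (Fin k)), (z :: zs).length ≤ k * (k ^ 2 + 1) ∧
      ∀ (I Λ : Type) (P : Λ → I → Bool) (α : Fin k → RM I Λ),
        listProd (rmul P) (α y) (ys.map α) = listProd (rmul P) (α z) (zs.map α) := by
  obtain ⟨w', hlen, hde⟩ := exists_short k (y :: ys).length (y :: ys) le_rfl
  have hh : (y :: ys).head? = w'.head? := hde.1
  cases w' with
  | nil => simp at hh
  | cons z zs =>
    refine ⟨z, zs, hlen, ?_⟩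
    intro I Λ P α
    rw [listProd_eq_F P α ys y, listProd_eq_F P α zs z]
    exact F_congr P α hde
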